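/- arXiv:2203.02714 — 3 statements merged into one kernel-verified Lean document; each statement's English description precedes it below -/
import Mathlib

section
/- Let E be a real Hilbert space (e.g., EuclideanSpace ℝ (Fin k)), let L : E → ℝ be differentiable on a neighborhood of a point w with gradient map ∇L, suppose the map ∇L : E → E is differentiable at w with derivative H : E →L[ℝ] E, that H is self-adjoint, and that ∇L(w) ≠ 0. Then for every ρ ≥ 0 the function u ↦ L(u) + ρ·‖∇L(u)‖ is differentiable at w and its gradient at w equals ∇L(w) + (ρ/‖∇L(w)‖) · H(∇L(w)); in particular, with ε̂ = (ρ/‖∇L(w)‖) • ∇L(w), this gradient equals ∇L(w) + H(ε̂). -/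
open scoped RealInnerProductSpace

/-- Rigorous content of Equation (4) of the paper: if `L` is differentiable near `w` with
gradient map `∇L`, the gradient map is differentiable at `w` with self-adjoint derivative
(Hessian) `H`, and `∇L(w) ≠ 0`, then `u ↦ L(u) + ρ·‖∇L(u)‖` has gradient
`∇L(w) + (ρ/‖∇L(w)‖)·H(∇L(w)) = ∇L(w) + H(ε̂)` at `w`, where `ε̂ = (ρ/‖∇L(w)‖) • ∇L(w)`. -/
theorem gradient_of_sam_regularized_objective
    {E : Type*} [NormedAddCommGroup E] [InnerProductSpace ℝ E] [CompleteSpace E]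
    (L : E → ℝ) (gradL : E → E) (w : E)
    (hL : ∀ᶠ u in nhds w, HasGradientAt L (gradL u) u)
    (H : E →L[ℝ] E) (hH : HasFDerivAt gradL H w)
    (hself : ∀ x y : E, ⟪H x, y⟫ = ⟪x, H y⟫)
    (hne : gradL w ≠ 0) (ρ : ℝ) (hρ : 0 ≤ ρ) :
    HasGradientAt (fun u => L u + ρ * ‖gradL u‖)
      (gradL w + (ρ / ‖gradL w‖) • H (gradL w)) w ∧
    gradL w + (ρ / ‖gradL w‖) • H (gradL w) =
      gradL w + H ((ρ / ‖gradL w‖) • gradL w) := by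
  have hLw : HasGradientAt L (gradL w) w := hL.self_of_nhds
  set g := gradL w with hg
  have hgg : (⟪g, g⟫ : ℝ) ≠ 0 := inner_self_ne_zero.2 hne
  have hsqrt : Real.sqrt ⟪g, g⟫ = ‖g‖ := by
    rw [real_inner_self_eq_norm_mul_norm, Real.sqrt_mul_self (norm_nonneg g)]
  have h1 : HasFDerivAt (fun u => (⟪gradL u, gradL u⟫ : ℝ))
      ((fderivInnerCLM ℝ (g, g)).comp (H.prod H)) w := hH.inner ℝ hH
  have h2 : HasDerivAt Real.sqrt (1 / (2 * Real.sqrt ⟪g, g⟫)) ⟪g, g⟫ :=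
    Real.hasDerivAt_sqrt hgg
  have h3 : HasFDerivAt (fun u => Real.sqrt ⟪gradL u, gradL u⟫)
      ((1 / (2 * Real.sqrt ⟪g, g⟫)) • ((fderivInnerCLM ℝ (g, g)).comp (H.prod H))) w :=
    h2.comp_hasFDerivAt w h1
  have h4 : HasFDerivAt (fun u => ‖gradL u‖)
      ((1 / (2 * Real.sqrt ⟪g, g⟫)) • ((fderivInnerCLM ℝ (g, g)).comp (H.prod H))) w := by
    convert h3 using 2 with u
    rw [real_inner_self_eq_norm_mul_norm, Real.sqrt_mul_self (norm_nonneg _)]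
  have h5 : HasFDerivAt (fun u => L u + ρ * ‖gradL u‖)
      ((InnerProductSpace.toDual ℝ E g : E →L[ℝ] ℝ) +
        ρ • ((1 / (2 * Real.sqrt ⟪g, g⟫)) • ((fderivInnerCLM ℝ (g, g)).comp (H.prod H)))) w :=
    hLw.hasFDerivAt.add (h4.const_smul ρ)
  have hmain : HasGradientAt (fun u => L u + ρ * ‖gradL u‖)
      (g + (ρ / ‖g‖) • H g) w := by
    rw [hasGradientAt_iff_hasFDerivAt]
    convert h5 using 1
    · rfl
    apply ContinuousLinearMap.ext
    intro v
    simp only [InnerProductSpace.toDual_apply_apply, ContinuousLinearMap.add_apply,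
      ContinuousLinearMap.smul_apply, ContinuousLinearMap.comp_apply,
      ContinuousLinearMap.prod_apply, fderivInnerCLM_apply, inner_add_left,
      real_inner_smul_left, smul_eq_mul, hsqrt]
    rw [hself g v, real_inner_comm (H v) g]
    have hn : ‖g‖ ≠ 0 := norm_ne_zero_iff.2 hne
    field_simp
    ring
  exact ⟨hmain, by rw [map_smul]⟩
end

section
/- Let k be a positive integer and let Z_1, …, Z_k be independent standard Gaussian random variables (equivalently, consider the product of k copies of the standard Gaussian measure on ℝ). Then for every real x > 0, the probability that ∑_{i=1}^k Z_i² ≥ k + 2·√(k·x) + 2·x is at most exp(−x). -/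
open MeasureTheory ProbabilityTheory
open Real

lemma gauss_density_rw :
    gaussianReal 0 1 = (volume : Measure ℝ).withDensity
      (fun x => ((gaussianPDFReal 0 1 x).toNNReal : ENNReal)) := by
  rw [gaussianReal_of_var_ne_zero 0 one_ne_zero]
  rfl

lemma gauss_pdf_mul {c : ℝ} (z : ℝ) :
    gaussianPDFReal 0 1 z * rexp (c * z ^ 2)
      = (Real.sqrt (2 * π))⁻¹ * rexp (-(1/2 - c) * z ^ 2) := by
  simp only [gaussianPDFReal, NNReal.coe_one, mul_one, sub_zero]
  rw [mul_assoc, ← Real.exp_add]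
  congr 2
  ring

lemma integrable_gauss_exp {c : ℝ} (hc : c < 1/2) :
    Integrable (fun z : ℝ => rexp (c * z ^ 2)) (gaussianReal 0 1) := by
  rw [gauss_density_rw]
  have h : Integrable (fun z : ℝ => (Real.sqrt (2 * π))⁻¹ * rexp (-(1/2 - c) * z ^ 2)) volume :=
    (integrable_exp_neg_mul_sq (by linarith)).const_mul _
  have hsmul : Integrable
      (fun z : ℝ => (gaussianPDFReal 0 1 z).toNNReal • rexp (c * z ^ 2)) volume := by
    refine h.congr (Filter.Eventually.of_forall fun z => ?_)
    simp only [NNReal.smul_def, smul_eq_mul,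
      Real.coe_toNNReal _ (gaussianPDFReal_nonneg 0 1 z), gauss_pdf_mul]
  exact (integrable_withDensity_iff_integrable_smul
      ((measurable_gaussianPDFReal 0 1).real_toNNReal)).mpr hsmul

lemma integral_gauss_exp {c : ℝ} (hc : c < 1/2) :
    ∫ z, rexp (c * z ^ 2) ∂(gaussianReal 0 1) = (Real.sqrt (1 - 2 * c))⁻¹ := by
  rw [gauss_density_rw, integral_withDensity_eq_integral_smul
      ((measurable_gaussianPDFReal 0 1).real_toNNReal)]
  have : ∀ z : ℝ, (gaussianPDFReal 0 1 z).toNNReal • rexp (c * z ^ 2)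
      = (Real.sqrt (2 * π))⁻¹ * rexp (-(1/2 - c) * z ^ 2) := by
    intro z
    rw [NNReal.smul_def, Real.coe_toNNReal _ (gaussianPDFReal_nonneg 0 1 z), smul_eq_mul,
      gauss_pdf_mul]
  simp_rw [this]
  rw [integral_const_mul, integral_gaussian]
  have hpos : (0:ℝ) < 1 - 2 * c := by linarith
  have h2 : π / (1/2 - c) = 2 * π / (1 - 2 * c) := by
    rw [div_eq_div_iff (by linarith) (by linarith)]; ring
  rw [h2, Real.sqrt_div (by positivity : (0:ℝ) ≤ 2 * π)]
  have h3 : Real.sqrt (2 * π) ≠ 0 := by positivity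
  field_simp

lemma prod_exp_eq {k : ℕ} {c : ℝ} (z : Fin k → ℝ) :
    rexp (c * ∑ i, (z i) ^ 2) = ∏ i, rexp (c * (z i) ^ 2) := by
  rw [Finset.mul_sum, Real.exp_sum]

lemma prod_exp_integral (k : ℕ) (c : ℝ) :
    ∫ z : Fin k → ℝ, rexp (c * ∑ i, (z i) ^ 2) ∂(Measure.pi fun _ : Fin k => gaussianReal 0 1)
      = (∫ z : ℝ, rexp (c * z ^ 2) ∂(gaussianReal 0 1)) ^ k := by
  letI : MeasureSpace ℝ := ⟨gaussianReal 0 1⟩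
  haveI : SigmaFinite (volume : Measure ℝ) := inferInstanceAs (SigmaFinite (gaussianReal 0 1))
  have h := MeasureTheory.integral_fintype_prod_volume_eq_pow (𝕜 := ℝ) (ι := Fin k)
    (fun z : ℝ => rexp (c * z ^ 2))
  simp only [Fintype.card_fin] at h
  simp_rw [prod_exp_eq]
  exact h

lemma prod_exp_integrable (k : ℕ) {c : ℝ} (hc : c < 1/2) :
    Integrable (fun z : Fin k → ℝ => rexp (c * ∑ i, (z i) ^ 2))
      (Measure.pi fun _ : Fin k => gaussianReal 0 1) := by
  letI : MeasureSpace ℝ := ⟨gaussianReal 0 1⟩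
  haveI : SigmaFinite (volume : Measure ℝ) := inferInstanceAs (SigmaFinite (gaussianReal 0 1))
  have h := MeasureTheory.Integrable.fintype_prod (𝕜 := ℝ)
    (f := fun _ : Fin k => fun z : ℝ => rexp (c * z ^ 2)) (fun _ => integrable_gauss_exp hc)
  simp_rw [prod_exp_eq]
  exact h

/-- The Laurent–Massart chi-square upper-tail bound: if `Z₁, …, Z_k` are i.i.d. standard
Gaussians then `P(∑ Zᵢ² ≥ k + 2√(kx) + 2x) ≤ exp(-x)` for all `x > 0`. -/
theorem chi_square_tail_bound (k : ℕ) (hk : 0 < k) (x : ℝ) (hx : 0 < x) :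
    (Measure.pi fun _ : Fin k => gaussianReal 0 1)
      {z | (k : ℝ) + 2 * Real.sqrt (k * x) + 2 * x ≤ ∑ i, (z i) ^ 2} ≤
    ENNReal.ofReal (Real.exp (-x)) := by
  set P := Measure.pi fun _ : Fin k => gaussianReal 0 1 with hP
  have hK : (0:ℝ) < k := Nat.cast_pos.mpr hk
  set a := Real.sqrt k with ha'
  set b := Real.sqrt x with hb'
  have ha : 0 < a := Real.sqrt_pos.mpr hK
  have hb : 0 < b := Real.sqrt_pos.mpr hx
  have hab : (0:ℝ) < a + 2 * b := by linarith
  have hKa : (k:ℝ) = a ^ 2 := (Real.sq_sqrt hK.le).symm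
  have hxb : x = b ^ 2 := (Real.sq_sqrt hx.le).symm
  have hsq : Real.sqrt ((k:ℝ) * x) = a * b := Real.sqrt_mul hK.le x
  set lam := b / (a + 2 * b) with hlam'
  have hlam0 : 0 < lam := div_pos hb hab
  have hlam : lam < 1/2 := by rw [hlam', div_lt_iff₀ hab]; nlinarith
  set T := (k : ℝ) + 2 * Real.sqrt ((k:ℝ) * x) + 2 * x with hT
  -- Chernoff bound
  have hch := measure_ge_le_exp_mul_mgf (μ := P)
    (X := fun z : Fin k → ℝ => ∑ i, (z i) ^ 2) (t := lam) T hlam0.le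
    (prod_exp_integrable k hlam)
  have hmgf : mgf (fun z : Fin k → ℝ => ∑ i, (z i) ^ 2) P lam
      = ((Real.sqrt (1 - 2 * lam))⁻¹) ^ k := by
    rw [mgf, hP, prod_exp_integral k lam, integral_gauss_exp hlam]
  rw [hmgf] at hch
  -- the analytic inequality
  have hs : (0:ℝ) < 1 - 2 * lam := by linarith
  have hs' : 1 - 2 * lam = a / (a + 2 * b) := by
    rw [hlam']; field_simp; ring
  have hy1 : (1:ℝ) ≤ (a + 2 * b) / a := by
    rw [le_div_iff₀ ha]; linarith
  have hy0 : (0:ℝ) < (a + 2 * b) / a := div_pos hab ha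
  have hlog : Real.log ((a + 2 * b) / a)
      ≤ ((a + 2 * b) / a - ((a + 2 * b) / a)⁻¹) / 2 := by
    have h1 : Real.log ((a + 2 * b) / a) ≤ Real.sinh (Real.log ((a + 2 * b) / a)) :=
      Real.self_le_sinh_iff.mpr (Real.log_nonneg hy1)
    rwa [Real.sinh_log hy0] at h1
  have hloginv : ((a + 2 * b) / a)⁻¹ = a / (a + 2 * b) := by
    rw [inv_div]
  have hlogs : Real.log (1 - 2 * lam) = - Real.log ((a + 2 * b) / a) := by
    rw [hs', ← hloginv, Real.log_inv]
  have hexp : ((Real.sqrt (1 - 2 * lam))⁻¹) ^ k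
      = rexp ((k : ℝ) * (-(Real.log (1 - 2 * lam) / 2))) := by
    have h1 : (Real.sqrt (1 - 2 * lam))⁻¹ = rexp (-(Real.log (1 - 2 * lam) / 2)) := by
      rw [← Real.log_sqrt hs.le, Real.exp_neg, Real.exp_log (Real.sqrt_pos.mpr hs)]
    rw [h1, ← Real.exp_nat_mul]
  -- main real inequality
  have key : rexp (-lam * T) * ((Real.sqrt (1 - 2 * lam))⁻¹) ^ k ≤ rexp (-x) := by
    rw [hexp, ← Real.exp_add, Real.exp_le_exp]
    rw [hlogs]
    have hL := mul_le_mul_of_nonneg_left hlog (by positivity : (0:ℝ) ≤ a ^ 2 / 2)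
    rw [hloginv] at hL
    rw [hT, hsq, hKa, hxb, hlam']
    have heq : a ^ 2 / 2 * (((a + 2 * b) / a - a / (a + 2 * b)) / 2)
        = b / (a + 2 * b) * (a ^ 2 + 2 * (a * b) + 2 * b ^ 2) - b ^ 2 := by
      field_simp
      ring
    nlinarith [hL, heq]
  -- conclude
  have hPfin : P {z : Fin k → ℝ | T ≤ ∑ i, (z i) ^ 2} ≠ ⊤ := measure_ne_top _ _
  calc P {z : Fin k → ℝ | T ≤ ∑ i, (z i) ^ 2}
      = ENNReal.ofReal (P {z : Fin k → ℝ | T ≤ ∑ i, (z i) ^ 2}).toReal :=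
        (ENNReal.ofReal_toReal hPfin).symm
    _ ≤ ENNReal.ofReal (rexp (-lam * T) * ((Real.sqrt (1 - 2 * lam))⁻¹) ^ k) :=
        ENNReal.ofReal_le_ofReal hch
    _ ≤ ENNReal.ofReal (rexp (-x)) := ENNReal.ofReal_le_ofReal key
end

section
/- Let k be a positive integer, let f : EuclideanSpace ℝ (Fin k) → ℝ be measurable with 0 ≤ f(u) ≤ 1 for all u, let w ∈ EuclideanSpace ℝ (Fin k), let σ' > 0, let n ≥ 2 be an integer, and set ρ' = σ'·√k·(1 + √((log n)/k)). Let μ be the Gaussian measure on EuclideanSpace ℝ (Fin k) whose coordinates are independent centered Gaussians of variance σ'^2. Then ∫ f(w + ε) dμ(ε) ≤ (1 − 1/√n) · sup_{‖ε‖₂ ≤ ρ'} f(w + ε) + 1/√n; in particular ∫ f(w + ε) dμ(ε) ≤ sup_{‖ε‖₂ ≤ ρ'} f(w + ε) + 1/√n. -/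
open MeasureTheory ProbabilityTheory Real
open scoped NNReal ENNReal

lemma pi_prod_integrable_and_integral {k : ℕ} (ν : Measure ℝ) [SigmaFinite ν] (g : ℝ → ℝ)
    (hg : Integrable g ν) :
    Integrable (fun x : Fin k → ℝ => ∏ i, g (x i)) (Measure.pi fun _ => ν) ∧
    ∫ x : Fin k → ℝ, ∏ i, g (x i) ∂(Measure.pi fun _ => ν) = (∫ x, g x ∂ν) ^ k := by
  letI : MeasureSpace ℝ := ⟨ν⟩
  constructor
  · exact MeasureTheory.Integrable.fintype_prod (f := fun _ : Fin k => g) (fun _ => hg)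
  · simpa using MeasureTheory.integral_fintype_prod_eq_pow (ι := Fin k) g (μ := ν)

lemma gaussian_exp_sq {σ : ℝ} (hσ : 0 < σ) {c : ℝ} (hc0 : 0 < c) (hc1 : c < 1) :
    Integrable (fun x => Real.exp (c / (2 * σ ^ 2) * x ^ 2))
      (gaussianReal 0 ⟨σ ^ 2, sq_nonneg σ⟩) ∧
    ∫ x, Real.exp (c / (2 * σ ^ 2) * x ^ 2) ∂(gaussianReal 0 ⟨σ ^ 2, sq_nonneg σ⟩)
      = (Real.sqrt (1 - c))⁻¹ := by
  set v : ℝ≥0 := ⟨σ ^ 2, sq_nonneg σ⟩ with hv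
  have hσ2 : (0:ℝ) < σ ^ 2 := by positivity
  have hvne : v ≠ 0 := by
    intro h
    have : (v : ℝ) = 0 := by rw [h]; simp
    rw [hv] at this
    change σ ^ 2 = 0 at this
    linarith
  have hb : 0 < (1 - c) / (2 * σ ^ 2) := div_pos (by linarith) (by positivity)
  have hvcoe : ((v : ℝ≥0) : ℝ) = σ ^ 2 := rfl
  have hpdf : ∀ x : ℝ, Real.exp (c / (2 * σ ^ 2) * x ^ 2) * gaussianPDFReal 0 v x
      = (Real.sqrt (2 * π * σ ^ 2))⁻¹ * Real.exp (-((1 - c) / (2 * σ ^ 2)) * x ^ 2) := by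
    intro x
    rw [gaussianPDFReal]
    simp only [hvcoe, sub_zero]
    rw [mul_comm, mul_assoc, ← Real.exp_add]
    congr 2
    field_simp
    ring
  have hint : Integrable (fun x => Real.exp (c / (2 * σ ^ 2) * x ^ 2) * gaussianPDFReal 0 v x)
      (volume : Measure ℝ) := by
    simp only [hpdf]
    exact (integrable_exp_neg_mul_sq hb).const_mul _
  have hgauss : gaussianReal 0 v = volume.withDensity (gaussianPDF 0 v) :=
    gaussianReal_of_var_ne_zero 0 hvne
  have hiff : Integrable (fun x => Real.exp (c / (2 * σ ^ 2) * x ^ 2)) (gaussianReal 0 v) ↔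
      Integrable (fun x => Real.exp (c / (2 * σ ^ 2) * x ^ 2) * (gaussianPDF 0 v x).toReal)
        (volume : Measure ℝ) := by
    rw [hgauss]
    exact integrable_withDensity_iff (measurable_gaussianPDF 0 v)
      (ae_of_all _ fun x => ENNReal.ofReal_lt_top)
  have htoReal : ∀ x, (gaussianPDF 0 v x).toReal = gaussianPDFReal 0 v x := fun x =>
    ENNReal.toReal_ofReal (gaussianPDFReal_nonneg 0 v x)
  have hint2 : Integrable (fun x => Real.exp (c / (2 * σ ^ 2) * x ^ 2)) (gaussianReal 0 v) := by
    rw [hiff]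
    simpa only [htoReal] using hint
  refine ⟨hint2, ?_⟩
  have hdens : gaussianPDF 0 v = fun x => ((Real.toNNReal (gaussianPDFReal 0 v x)) : ℝ≥0∞) :=
    rfl
  rw [hgauss, hdens, integral_withDensity_eq_integral_smul
    ((measurable_gaussianPDFReal 0 v).real_toNNReal) _]
  have hsm : ∀ x : ℝ, (Real.toNNReal (gaussianPDFReal 0 v x)) • Real.exp (c / (2 * σ ^ 2) * x ^ 2)
      = Real.exp (c / (2 * σ ^ 2) * x ^ 2) * gaussianPDFReal 0 v x := by
    intro x
    rw [NNReal.smul_def, smul_eq_mul, Real.coe_toNNReal _ (gaussianPDFReal_nonneg 0 v x), mul_comm]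
  calc ∫ x, (Real.toNNReal (gaussianPDFReal 0 v x)) • Real.exp (c / (2 * σ ^ 2) * x ^ 2)
      = ∫ x, (Real.sqrt (2 * π * σ ^ 2))⁻¹ * Real.exp (-((1 - c) / (2 * σ ^ 2)) * x ^ 2) := by
        congr 1; funext x; rw [hsm x, hpdf x]
    _ = (Real.sqrt (2 * π * σ ^ 2))⁻¹ * Real.sqrt (π / ((1 - c) / (2 * σ ^ 2))) := by
        rw [integral_const_mul, integral_gaussian]
    _ = (Real.sqrt (1 - c))⁻¹ := by
        have h2 : π / ((1 - c) / (2 * σ ^ 2)) = (2 * π * σ ^ 2) * (1 - c)⁻¹ := by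
          field_simp
        rw [h2, Real.sqrt_mul (show (0:ℝ) ≤ 2 * π * σ ^ 2 by positivity) (1 - c)⁻¹, Real.sqrt_inv]
        have : Real.sqrt (2 * π * σ ^ 2) ≠ 0 := by positivity
        field_simp

set_option maxHeartbeats 1000000 in
/-- The step leading to Equation (36): for a `[0,1]`-valued measurable loss `f`, the
Gaussian-smoothed loss at `w` is bounded by the worst-case loss over the Euclidean ball of
radius `ρ' = σ'·√k·(1 + √((log n)/k))` up to the additive failure probability `1/√n`. -/
theorem gaussian_smoothed_loss_le_ball_sup (k : ℕ) (hk : 0 < k)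
    (f : EuclideanSpace ℝ (Fin k) → ℝ) (hf : Measurable f)
    (hf01 : ∀ u, 0 ≤ f u ∧ f u ≤ 1)
    (w : EuclideanSpace ℝ (Fin k)) (σ' : ℝ) (hσ' : 0 < σ') (n : ℕ) (hn : 2 ≤ n)
    (ρ' : ℝ) (hρ' : ρ' = σ' * Real.sqrt k * (1 + Real.sqrt (Real.log n / k)))
    (μ : Measure (EuclideanSpace ℝ (Fin k)))
    (hμ : μ = (Measure.pi fun _ : Fin k => gaussianReal 0 ⟨σ' ^ 2, sq_nonneg σ'⟩).map
      (MeasurableEquiv.toLp 2 (Fin k → ℝ))) :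
    (∫ ε, f (w + ε) ∂μ) ≤
      (1 - 1 / Real.sqrt n) * sSup ((fun ε => f (w + ε)) '' Metric.closedBall 0 ρ')
        + 1 / Real.sqrt n ∧
    (∫ ε, f (w + ε) ∂μ) ≤
      sSup ((fun ε => f (w + ε)) '' Metric.closedBall 0 ρ') + 1 / Real.sqrt n := by
  have hk' : (0:ℝ) < k := Nat.cast_pos.mpr hk
  have hn1 : (1:ℝ) < n := by exact_mod_cast lt_of_lt_of_le one_lt_two hn
  set L := Real.log n with hLdef
  have hL : 0 < L := Real.log_pos hn1
  have hsqk : 0 < Real.sqrt k := Real.sqrt_pos.2 hk'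
  have hsqL : 0 < Real.sqrt L := Real.sqrt_pos.2 hL
  set t : ℝ := (Real.sqrt k + Real.sqrt L) ^ 2 with htdef
  have hkk : (Real.sqrt k) ^ 2 = (k:ℝ) := Real.sq_sqrt hk'.le
  have hLL : (Real.sqrt L) ^ 2 = L := Real.sq_sqrt hL.le
  have hkt : (k:ℝ) < t := by
    have h : (Real.sqrt k) ^ 2 < (Real.sqrt k + Real.sqrt L) ^ 2 := by
      nlinarith [mul_pos hsqk hsqL, hLL, hL]
    rw [hkk] at h; exact h
  have ht0 : 0 < t := lt_trans hk' hkt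
  set c : ℝ := 1 - k / t with hcdef
  have hc0 : 0 < c := by
    have h : (k:ℝ) / t < 1 := (div_lt_one ht0).2 hkt
    rw [hcdef]; linarith
  have hc1 : c < 1 := by
    have h : 0 < (k:ℝ) / t := div_pos hk' ht0
    rw [hcdef]; linarith
  have ha0 : 0 ≤ c / (2 * σ' ^ 2) := div_nonneg hc0.le (by positivity)
  -- rho
  have hsks : Real.sqrt k * Real.sqrt (L / k) = Real.sqrt L := by
    rw [← Real.sqrt_mul hk'.le, mul_div_cancel₀ _ (ne_of_gt hk')]
  have hρeq : ρ' = σ' * (Real.sqrt k + Real.sqrt L) := by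
    rw [hρ']; linear_combination σ' * hsks
  have hρ0 : 0 ≤ ρ' := by rw [hρeq]; positivity
  have hρsq : ρ' ^ 2 = σ' ^ 2 * t := by rw [hρeq, htdef]; ring
  set v : ℝ≥0 := ⟨σ' ^ 2, sq_nonneg σ'⟩ with hvdef
  set Mpi := Measure.pi fun _ : Fin k => gaussianReal 0 v with hMpidef
  haveI : IsProbabilityMeasure Mpi := by rw [hMpidef]; infer_instance
  haveI hμprob : IsProbabilityMeasure μ := by
    rw [hμ]
    exact Measure.isProbabilityMeasure_map (Measurable.aemeasurable (MeasurableEquiv.measurable _))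
  obtain ⟨hg_int, hg_val⟩ := gaussian_exp_sq hσ' hc0 hc1
  obtain ⟨hG_int, hG_val⟩ := pi_prod_integrable_and_integral (k := k) (gaussianReal 0 v)
      (fun x => Real.exp (c / (2 * σ' ^ 2) * x ^ 2)) hg_int
  have hprodeq : (fun x : Fin k → ℝ => ∏ i, Real.exp (c / (2 * σ' ^ 2) * x i ^ 2))
      = fun x => Real.exp (c / (2 * σ' ^ 2) * ∑ i, x i ^ 2) := by
    funext x; rw [← Real.exp_sum]; congr 1; rw [Finset.mul_sum]
  rw [hprodeq] at hG_int hG_val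
  rw [hg_val] at hG_val
  have hmar := mul_meas_ge_le_integral_of_nonneg (μ := Mpi)
      (ae_of_all _ fun x => (Real.exp_pos (c / (2 * σ' ^ 2) * ∑ i, x i ^ 2)).le) hG_int
      (Real.exp (c / (2 * σ' ^ 2) * ρ' ^ 2))
  rw [hG_val] at hmar
  set B := Metric.closedBall (0 : EuclideanSpace ℝ (Fin k)) ρ' with hBdef
  have hBmeas : MeasurableSet B := measurableSet_closedBall
  have hμBc : μ Bᶜ = Mpi ((MeasurableEquiv.toLp 2 (Fin k → ℝ)) ⁻¹' Bᶜ) := by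
    rw [hμ]; exact MeasurableEquiv.map_apply _ _
  have hsub : ((MeasurableEquiv.toLp 2 (Fin k → ℝ)) ⁻¹' Bᶜ)
      ⊆ {x : Fin k → ℝ | Real.exp (c / (2 * σ' ^ 2) * ρ' ^ 2)
          ≤ Real.exp (c / (2 * σ' ^ 2) * ∑ i, x i ^ 2)} := by
    intro x hx
    simp only [Set.mem_preimage, Set.mem_compl_iff, hBdef, Metric.mem_closedBall,
      dist_zero_right, not_le] at hx
    have hnorm : ‖(MeasurableEquiv.toLp 2 (Fin k → ℝ)) x‖
        = Real.sqrt (∑ i, x i ^ 2) := by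
      rw [EuclideanSpace.norm_eq]
      congr 1
      refine Finset.sum_congr rfl fun i _ => ?_
      rw [Real.norm_eq_abs, sq_abs]
      rfl
    rw [hnorm] at hx
    have h1 : 0 ≤ ∑ i, x i ^ 2 := Finset.sum_nonneg fun i _ => sq_nonneg _
    have hsum : ρ' ^ 2 ≤ ∑ i, x i ^ 2 := by
      have h2 : ρ' ^ 2 ≤ Real.sqrt (∑ i, x i ^ 2) ^ 2 := by
        apply pow_le_pow_left₀ hρ0 hx.le
      rwa [Real.sq_sqrt h1] at h2
    exact Real.exp_le_exp.2 (mul_le_mul_of_nonneg_left hsum ha0)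
  have hE : 0 < Real.exp (c / (2 * σ' ^ 2) * ρ' ^ 2) := Real.exp_pos _
  have hp_le : (μ Bᶜ).toReal
      ≤ ((Real.sqrt (1 - c))⁻¹) ^ k / Real.exp (c / (2 * σ' ^ 2) * ρ' ^ 2) := by
    have h1 : (μ Bᶜ).toReal ≤ (Mpi {x : Fin k → ℝ | Real.exp (c / (2 * σ' ^ 2) * ρ' ^ 2)
        ≤ Real.exp (c / (2 * σ' ^ 2) * ∑ i, x i ^ 2)}).toReal := by
      rw [hμBc]
      exact ENNReal.toReal_mono (measure_ne_top _ _) (measure_mono hsub)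
    refine h1.trans ?_
    rw [le_div_iff₀ hE, mul_comm]
    exact hmar
  -- numeric bound
  have hkey : ((Real.sqrt (1 - c))⁻¹) ^ k / Real.exp (c / (2 * σ' ^ 2) * ρ' ^ 2)
      ≤ 1 / Real.sqrt n := by
    have h1c : 1 - c = (k:ℝ) / t := by rw [hcdef]; ring
    have hkt0 : 0 < (k:ℝ) / t := div_pos hk' ht0
    have hsrt : Real.sqrt (1 - c) = Real.exp (Real.log ((k:ℝ) / t) / 2) := by
      rw [h1c, ← Real.log_sqrt hkt0.le, Real.exp_log (Real.sqrt_pos.2 hkt0)]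
    have har : c / (2 * σ' ^ 2) * ρ' ^ 2 = c * t / 2 := by
      rw [hρsq]; field_simp
    have hLHS : ((Real.sqrt (1 - c))⁻¹) ^ k / Real.exp (c / (2 * σ' ^ 2) * ρ' ^ 2)
        = Real.exp ((k:ℝ) * (-(Real.log ((k:ℝ) / t) / 2)) - c * t / 2) := by
      rw [hsrt, har, ← Real.exp_neg, ← Real.exp_nat_mul, ← Real.exp_sub]
    have hRHS : 1 / Real.sqrt n = Real.exp (-(L / 2)) := by
      have hn0 : (0:ℝ) < n := by linarith
      have h2 : Real.sqrt n = Real.exp (L / 2) := by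
        rw [hLdef, ← Real.log_sqrt hn0.le, Real.exp_log (Real.sqrt_pos.2 hn0)]
      rw [h2, one_div, Real.exp_neg]
    rw [hLHS, hRHS]
    apply Real.exp_le_exp.2
    have hct : c * t = t - k := by rw [hcdef]; field_simp
    have hloginv : Real.log ((k:ℝ) / t) = -Real.log (t / k) := by
      rw [← Real.log_inv]; congr 1; rw [inv_div]
    have hx : 0 < t / (k:ℝ) := div_pos ht0 hk'
    have hlog2 : Real.log (t / k) ≤ 2 * (Real.sqrt (t / k) - 1) := by
      have h := Real.log_le_sub_one_of_pos (Real.sqrt_pos.2 hx)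
      rw [Real.log_sqrt hx.le] at h
      linarith
    have hsqtk : Real.sqrt (t / k) = (Real.sqrt k + Real.sqrt L) / Real.sqrt k := by
      rw [Real.sqrt_div (by positivity : (0:ℝ) ≤ t), htdef,
        Real.sqrt_sq (by positivity : (0:ℝ) ≤ Real.sqrt k + Real.sqrt L)]
    have hkl : (k:ℝ) * Real.log (t / k) ≤ t - (k:ℝ) - L := by
      have h3 : (k:ℝ) * Real.log (t / k)
          ≤ (k:ℝ) * (2 * ((Real.sqrt k + Real.sqrt L) / Real.sqrt k - 1)) := by
        have h := mul_le_mul_of_nonneg_left hlog2 hk'.le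
        rwa [hsqtk] at h
      have h6 : (k:ℝ) * (2 * ((Real.sqrt k + Real.sqrt L) / Real.sqrt k - 1))
          = 2 * Real.sqrt k * Real.sqrt L := by
        field_simp
        linear_combination (-(Real.sqrt L)) * hkk
      have ht_expand : t = (k:ℝ) + 2 * Real.sqrt k * Real.sqrt L + L := by
        rw [htdef]; linear_combination hkk + hLL
      linarith [h3, h6, ht_expand]
    rw [hloginv, hct]
    linarith
  have hp : (μ Bᶜ).toReal ≤ 1 / Real.sqrt n := hp_le.trans hkey
  -- integral part
  have hmeas_h : Measurable (fun ε : EuclideanSpace ℝ (Fin k) => f (w + ε)) :=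
    hf.comp (measurable_id.const_add w)
  have hInt : Integrable (fun ε => f (w + ε)) μ := by
    refine Integrable.mono' (integrable_const 1) hmeas_h.aestronglyMeasurable ?_
    refine ae_of_all _ fun ε => ?_
    rw [Real.norm_eq_abs, abs_le]
    exact ⟨by linarith [(hf01 (w + ε)).1], (hf01 (w + ε)).2⟩
  set S := sSup ((fun ε => f (w + ε)) '' B) with hSdef
  have hmem0 : f (w + 0) ∈ (fun ε => f (w + ε)) '' B :=
    ⟨0, by simp [hBdef, Metric.mem_closedBall, hρ0], rfl⟩
  have hne : ((fun ε => f (w + ε)) '' B).Nonempty := ⟨_, hmem0⟩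
  have hbdd : BddAbove ((fun ε => f (w + ε)) '' B) := by
    refine ⟨1, fun y hy => ?_⟩
    obtain ⟨ε, -, rfl⟩ := hy
    exact (hf01 (w + ε)).2
  have hS1 : S ≤ 1 := csSup_le hne (by rintro y ⟨ε, -, rfl⟩; exact (hf01 (w + ε)).2)
  have hS0 : 0 ≤ S := le_trans (hf01 (w + 0)).1 (le_csSup hbdd hmem0)
  have hsplit : (∫ ε, f (w + ε) ∂μ)
      = (∫ ε in B, f (w + ε) ∂μ) + ∫ ε in Bᶜ, f (w + ε) ∂μ :=
    (integral_add_compl hBmeas hInt).symm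
  have h1 : (∫ ε in B, f (w + ε) ∂μ) ≤ S * (μ B).toReal := by
    have := setIntegral_mono_on hInt.integrableOn (integrable_const S).integrableOn hBmeas
      (fun ε hε => le_csSup hbdd ⟨ε, hε, rfl⟩)
    rwa [setIntegral_const, smul_eq_mul, mul_comm] at this
  have h2 : (∫ ε in Bᶜ, f (w + ε) ∂μ) ≤ (μ Bᶜ).toReal := by
    have := setIntegral_mono_on hInt.integrableOn (integrable_const (1:ℝ)).integrableOn
      hBmeas.compl (fun ε _ => (hf01 (w + ε)).2)
    rwa [setIntegral_const, smul_eq_mul, mul_one] at this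
  have hadd : (μ B).toReal + (μ Bᶜ).toReal = 1 := by
    rw [← ENNReal.toReal_add (measure_ne_top _ _) (measure_ne_top _ _),
      measure_add_measure_compl hBmeas, measure_univ, ENNReal.toReal_one]
  have hp0 : 0 ≤ (μ Bᶜ).toReal := ENNReal.toReal_nonneg
  have hmain : (∫ ε, f (w + ε) ∂μ) ≤ (1 - 1 / Real.sqrt n) * S + 1 / Real.sqrt n := by
    rw [hsplit]
    have hBtoReal : (μ B).toReal = 1 - (μ Bᶜ).toReal := by linarith
    calc (∫ ε in B, f (w + ε) ∂μ) + ∫ ε in Bᶜ, f (w + ε) ∂μ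
        ≤ S * (μ B).toReal + (μ Bᶜ).toReal := add_le_add h1 h2
      _ ≤ (1 - 1 / Real.sqrt n) * S + 1 / Real.sqrt n := by
          rw [hBtoReal]
          have hq := mul_nonneg (sub_nonneg.2 hp) (sub_nonneg.2 hS1)
          linarith [hq]
  refine ⟨hmain, hmain.trans ?_⟩
  have hsn : 0 < Real.sqrt n := Real.sqrt_pos.2 (by linarith)
  have hq := mul_nonneg (le_of_lt (one_div_pos.2 hsn)) hS0
  linarith [hq]
end
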